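/- Let K be a field of characteristic not 2, V a K-vector space of dimension 3, and Q a quadratic form on V. Then for every element x of the Clifford algebra of Q, the product x * conj x * reverse (x * conj x), where conj x := reverse (involute x), is a scalar, i.e. it lies in the range of algebraMap K (CliffordAlgebra Q). (This is the paper's first three-dimensional determinant formula Det(A) = A⟦A⟧₁₂⟦A⟦A⟧₁₂⟧₃₄, written in reverse–inversion form as Det(A) = A · conj(A) · rev(A · conj(A)).) -/

import Mathlib

open CliffordAlgebra

set_option maxHeartbeats 1000000 in
/-- In dimension 3 (char K ≠ 2), `x * conj x * reverse (x * conj x)` with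
`conj y = reverse (involute y)` is a scalar: the paper's first
three-dimensional determinant formula `Det(A) = A ⟦A⟧₁₂ ⟦A ⟦A⟧₁₂⟧₃₄`. -/
theorem det_dim_three_first (K V : Type*) [Field K] [AddCommGroup V] [Module K V]
    [FiniteDimensional K V] (h2 : (2 : K) ≠ 0)
    (hdim : Module.finrank K V = 3)
    (Q : QuadraticForm K V) (x : CliffordAlgebra Q) :
    x * reverse (involute x) * reverse (x * reverse (involute x)) ∈
      Set.range (algebraMap K (CliffordAlgebra Q)) := by
  have h2' : Invertible (2 : K) := invertibleOfNonzero h2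
  obtain ⟨v, hv⟩ := LinearMap.BilinForm.exists_orthogonal_basis
    (QuadraticForm.associated_isSymm K Q)
  let e : Module.Basis (Fin 3) K V := v.reindex (finCongr hdim)
  have hortho : ∀ i j : Fin 3, i ≠ j → Q.IsOrtho (e i) (e j) := by
    intro i j hij
    rw [← QuadraticMap.associated_isOrtho]
    show QuadraticMap.associated (R := K) Q _ _ = 0
    simp only [e, Module.Basis.reindex_apply]
    exact hv (fun h => hij (by simpa using congrArg (finCongr hdim) h))
  have s10 : ∀ y, ι Q (e 1) * (ι Q (e 0) * y) = -(ι Q (e 0) * (ι Q (e 1) * y)) :=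
    fun y => ι_mul_ι_mul_of_isOrtho y (hortho 1 0 (by decide))
  have s20 : ∀ y, ι Q (e 2) * (ι Q (e 0) * y) = -(ι Q (e 0) * (ι Q (e 2) * y)) :=
    fun y => ι_mul_ι_mul_of_isOrtho y (hortho 2 0 (by decide))
  have s21 : ∀ y, ι Q (e 2) * (ι Q (e 1) * y) = -(ι Q (e 1) * (ι Q (e 2) * y)) :=
    fun y => ι_mul_ι_mul_of_isOrtho y (hortho 2 1 (by decide))
  have s10' : ι Q (e 1) * ι Q (e 0) = -(ι Q (e 0) * ι Q (e 1)) :=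
    ι_mul_ι_comm_of_isOrtho (hortho 1 0 (by decide))
  have s20' : ι Q (e 2) * ι Q (e 0) = -(ι Q (e 0) * ι Q (e 2)) :=
    ι_mul_ι_comm_of_isOrtho (hortho 2 0 (by decide))
  have s21' : ι Q (e 2) * ι Q (e 1) = -(ι Q (e 1) * ι Q (e 2)) :=
    ι_mul_ι_comm_of_isOrtho (hortho 2 1 (by decide))
  have sqg : ∀ (i : Fin 3) y, ι Q (e i) * (ι Q (e i) * y) = Q (e i) • y := by
    intro i y
    rw [← mul_assoc, ι_sq_scalar, ← Algebra.smul_def]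
  have sqg' : ∀ i : Fin 3, ι Q (e i) * ι Q (e i) = Q (e i) • 1 := by
    intro i
    rw [ι_sq_scalar, Algebra.algebraMap_eq_smul_one]
  have sq0 := sqg 0; have sq1 := sqg 1; have sq2 := sqg 2
  have sq0' := sqg' 0; have sq1' := sqg' 1; have sq2' := sqg' 2
  set S : Set (CliffordAlgebra Q) :=
    {1, ι Q (e 0), ι Q (e 1), ι Q (e 2), ι Q (e 0) * ι Q (e 1), ι Q (e 0) * ι Q (e 2),
      ι Q (e 1) * ι Q (e 2), ι Q (e 0) * (ι Q (e 1) * ι Q (e 2))} with hS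
  set F : Submodule K (CliffordAlgebra Q) := Submodule.span K S with hF
  have hm1 : (1 : CliffordAlgebra Q) ∈ F := Submodule.subset_span (by rw [hS]; left; rfl)
  have hm2 : ι Q (e 0) ∈ F := Submodule.subset_span (by rw [hS]; right; left; rfl)
  have hm3 : ι Q (e 1) ∈ F := Submodule.subset_span (by rw [hS]; right; right; left; rfl)
  have hm4 : ι Q (e 2) ∈ F := Submodule.subset_span (by rw [hS]; right;right;right;left;rfl)
  have hm5 : ι Q (e 0) * ι Q (e 1) ∈ F :=
    Submodule.subset_span (by rw [hS]; right;right;right;right;left;rfl)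
  have hm6 : ι Q (e 0) * ι Q (e 2) ∈ F :=
    Submodule.subset_span (by rw [hS]; right;right;right;right;right;left;rfl)
  have hm7 : ι Q (e 1) * ι Q (e 2) ∈ F :=
    Submodule.subset_span (by rw [hS]; right;right;right;right;right;right;left;rfl)
  have hm8 : ι Q (e 0) * (ι Q (e 1) * ι Q (e 2)) ∈ F :=
    Submodule.subset_span (by rw [hS]; right;right;right;right;right;right;right;rfl)
  have hmul : ∀ i : Fin 3, ∀ y ∈ F, ι Q (e i) * y ∈ F := by
    intro i y hy
    rw [hF] at hy
    induction hy using Submodule.span_induction with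
    | mem z hz =>
      rw [hS] at hz
      simp only [Set.mem_insert_iff, Set.mem_singleton_iff] at hz
      obtain hi | hi | hi : i = 0 ∨ i = 1 ∨ i = 2 := by omega
      all_goals subst hi
      all_goals obtain rfl | rfl | rfl | rfl | rfl | rfl | rfl | rfl := hz
      all_goals try simp only [Fin.isValue, mul_one, s10, s20, s21, s10', s20', s21',
        sq0, sq1, sq2, sq0', sq1', sq2', mul_neg, neg_neg, mul_smul_comm, smul_neg]
      all_goals first
        | assumption
        | exact F.neg_mem (by assumption)
        | exact F.smul_mem _ (by assumption)
        | exact F.neg_mem (F.smul_mem _ (by assumption))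
        | exact F.smul_mem _ (F.neg_mem (by assumption))
    | zero => simpa using F.zero_mem
    | add a b _ _ ha hb => rw [mul_add]; exact F.add_mem ha hb
    | smul r a _ ha => rw [mul_smul_comm]; exact F.smul_mem r ha
  have key : ∀ z : CliffordAlgebra Q, ∀ y ∈ F, z * y ∈ F := by
    intro z
    induction z using CliffordAlgebra.induction with
    | algebraMap r => intro y hy; rw [← Algebra.smul_def]; exact F.smul_mem r hy
    | ι w =>
      intro y hy
      have hw : ι Q w = ∑ i, e.repr w i • ι Q (e i) := by
        conv_lhs => rw [← e.sum_repr w]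
        rw [map_sum]
        simp [map_smul]
      rw [hw, Finset.sum_mul]
      exact F.sum_mem fun i _ => by
        rw [smul_mul_assoc]; exact F.smul_mem _ (hmul i y hy)
    | mul a b ha hb => intro y hy; rw [mul_assoc]; exact ha _ (hb _ hy)
    | add a b ha hb => intro y hy; rw [add_mul]; exact F.add_mem (ha y hy) (hb y hy)
  have hFtop : ∀ z : CliffordAlgebra Q, z ∈ F := fun z => by
    simpa using key z 1 hm1
  set Zs : Submodule K (CliffordAlgebra Q) :=
    Submodule.span K {(1 : CliffordAlgebra Q), ι Q (e 0) * (ι Q (e 1) * ι Q (e 2))} with hZs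
  have hz1 : (1 : CliffordAlgebra Q) ∈ Zs := Submodule.subset_span (by left; rfl)
  have hzw : ι Q (e 0) * (ι Q (e 1) * ι Q (e 2)) ∈ Zs := Submodule.subset_span (by right; rfl)
  have hrevw : reverse (ι Q (e 0) * (ι Q (e 1) * ι Q (e 2)))
      = -(ι Q (e 0) * (ι Q (e 1) * ι Q (e 2))) := by
    simp only [reverse.map_mul, reverse_ι, mul_assoc, s10, s20, s21, s10', s20', s21',
      mul_neg, neg_mul, neg_neg, mul_one]
  have hconjZ : ∀ z : CliffordAlgebra Q, z + reverse (involute z) ∈ Zs := by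
    intro z
    have hzF := hFtop z
    rw [hF] at hzF
    induction hzF using Submodule.span_induction with
    | mem w hw =>
      rw [hS] at hw
      simp only [Set.mem_insert_iff, Set.mem_singleton_iff] at hw
      obtain rfl | rfl | rfl | rfl | rfl | rfl | rfl | rfl := hw
      all_goals try simp only [map_one, reverse.map_one, map_mul, involute_ι, map_neg,
        reverse.map_mul, reverse_ι, neg_mul, mul_neg, neg_neg, neg_mul_neg, mul_assoc,
        s10, s20, s21, s10', s20', s21', add_neg_cancel, neg_add_cancel]
      all_goals first
        | exact Zs.zero_mem
        | exact Zs.add_mem hz1 hz1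
        | exact Zs.add_mem hzw hzw
    | zero => simpa using Zs.zero_mem
    | add u w _ _ hu hw =>
      rw [map_add, map_add, add_add_add_comm]
      exact Zs.add_mem hu hw
    | smul r w _ hw =>
      rw [map_smul, map_smul, ← smul_add]
      exact Zs.smul_mem r hw
  have conjconj : ∀ a : CliffordAlgebra Q,
      reverse (involute (reverse (involute a))) = a := fun a => by
    rw [reverse_involute, reverse_reverse, involute_involute]
  have hxi : reverse (involute (x * reverse (involute x))) = x * reverse (involute x) := by
    rw [map_mul, reverse.map_mul, conjconj]
  have hmem : x * reverse (involute x) ∈ Zs := by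
    have h := hconjZ (x * reverse (involute x))
    rw [hxi] at h
    have h' := Zs.smul_mem (2⁻¹ : K) h
    rwa [← two_smul K, smul_smul, inv_mul_cancel₀ h2, one_smul] at h'
  rw [hZs] at hmem
  obtain ⟨a, b, hab⟩ := Submodule.mem_span_pair.mp hmem
  have hw2 : (ι Q (e 0) * (ι Q (e 1) * ι Q (e 2))) * (ι Q (e 0) * (ι Q (e 1) * ι Q (e 2)))
      = -((Q (e 2) * (Q (e 1) * Q (e 0))) • (1 : CliffordAlgebra Q)) := by
    simp only [mul_assoc, s10, s20, s21, s10', s20', s21', sq0, sq1, sq2, sq0', sq1', sq2',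
      mul_neg, neg_mul, neg_neg, mul_smul_comm, smul_smul, smul_neg, mul_one]
  refine ⟨a * a + b * b * (Q (e 2) * (Q (e 1) * Q (e 0))), ?_⟩
  have hrev : reverse (a • (1 : CliffordAlgebra Q)
        + b • (ι Q (e 0) * (ι Q (e 1) * ι Q (e 2))))
      = a • (1 : CliffordAlgebra Q) - b • (ι Q (e 0) * (ι Q (e 1) * ι Q (e 2))) := by
    rw [map_add, map_smul, map_smul, reverse.map_one, hrevw, smul_neg, ← sub_eq_add_neg]
  rw [← hab, hrev]
  simp only [mul_add, add_mul, smul_sub, mul_sub, smul_mul_assoc, mul_smul_comm, smul_smul,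
    mul_one, one_mul, mul_neg, smul_neg, hw2, neg_neg, Algebra.algebraMap_eq_smul_one, map_add,
    map_mul]
  module
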